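/- For every k ≤ n/2, every RTLW(k) refutation of the functional pigeonhole principle clauses FPHP_n has size at least 2^{c·n·log n} for some absolute constant c > 0 (e.g., size at least (1/2)·(n/8)^{n/8}). -/

import Mathlib

open Classical

noncomputable section

abbrev Var := ℕ
abbrev Lit := Var × Bool

def Lit.neg (l : Lit) : Lit := (l.1, !l.2)
def posLit (x : Var) : Lit := (x, true)
def negLit (x : Var) : Lit := (x, false)

abbrev Clause := Finset Lit
abbrev CNF := Set Clause
abbrev Assign := Var → Option Bool

def Assign.set (α : Assign) (x : Var) (b : Bool) : Assign :=
  fun y => if y = x then some b else α y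

def emptyAssign : Assign := fun _ => none

/-- `α` assigns the value false to every literal of `C` (i.e. `C↾α = 0`). -/
def falsifies (α : Assign) (C : Clause) : Prop := ∀ l ∈ C, α l.1 = some (!l.2)

def satLit (α : Assign) (l : Lit) : Prop := α l.1 = some l.2

/-- `F↾α = 0`. -/
def CNFFalse (F : CNF) (α : Assign) : Prop := ∃ C ∈ F, falsifies α C

/-- `F↾α = 1`. -/
def CNFTrue (F : CNF) (α : Assign) : Prop := ∀ C ∈ F, ∃ l ∈ C, satLit α l

def Unsat (F : CNF) : Prop := ¬ ∃ β : Var → Bool, ∀ C ∈ F, ∃ l ∈ C, β l.1 = l.2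

/-- The (w-)resolvent of `C0` and `C1` on the variable `x`. -/
def Resolvent (C0 C1 : Clause) (x : Var) : Clause :=
  C0.erase (posLit x) ∪ C1.erase (negLit x)

/-- A resolution derivation, as a sequence of clauses. -/
def IsResDeriv (F : CNF) (L : List Clause) : Prop :=
  ∀ i (hi : i < L.length),
    L[i] ∈ F ∨ ∃ j k x, ∃ hj : j < L.length, ∃ hk : k < L.length, j < i ∧ k < i ∧
      posLit x ∈ L[j] ∧ negLit x ∈ L[k] ∧ L[i] = Resolvent L[j] L[k] x

/-- A w-resolution derivation: no membership requirements on the resolved variable. -/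
def IsWResDeriv (F : CNF) (L : List Clause) : Prop :=
  ∀ i (hi : i < L.length),
    L[i] ∈ F ∨ ∃ j k x, ∃ hj : j < L.length, ∃ hk : k < L.length, j < i ∧ k < i ∧
      L[i] = Resolvent L[j] L[k] x

/-- A derivation using resolution and the weakening rule. -/
def IsResWeakDeriv (F : CNF) (L : List Clause) : Prop :=
  ∀ i (hi : i < L.length),
    L[i] ∈ F ∨
    (∃ j, ∃ hj : j < L.length, j < i ∧ L[j] ⊆ L[i]) ∨
    ∃ j k x, ∃ hj : j < L.length, ∃ hk : k < L.length, j < i ∧ k < i ∧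
      posLit x ∈ L[j] ∧ negLit x ∈ L[k] ∧ L[i] = Resolvent L[j] L[k] x

/-- Ordered binary resolution trees (nodes carry their clause and resolution variable). -/
inductive RTree where
  | leaf (C : Clause)
  | node (C : Clause) (x : Var) (t0 t1 : RTree)

namespace RTree

def conc : RTree → Clause
  | leaf C => C
  | node C _ _ _ => C

def size : RTree → ℕ
  | leaf _ => 1
  | node _ _ t0 t1 => t0.size + t1.size + 1

def resVars : RTree → Finset Var
  | leaf _ => ∅
  | node _ x t0 t1 => insert x (t0.resVars ∪ t1.resVars)

def allClauses : RTree → Set Clause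
  | leaf C => {C}
  | node C _ t0 t1 => {C} ∪ t0.allClauses ∪ t1.allClauses

def derivedClauses : RTree → Set Clause
  | leaf _ => ∅
  | node C _ t0 t1 => {C} ∪ t0.derivedClauses ∪ t1.derivedClauses

def leafClauses : RTree → Set Clause
  | leaf C => {C}
  | node _ _ t0 t1 => t0.leafClauses ∪ t1.leafClauses

def isLeaf : RTree → Prop
  | leaf _ => True
  | node _ _ _ _ => False

/-- Every internal node has at least one leaf child: input trees. -/
def inputShape : RTree → Prop
  | leaf _ => True
  | node _ _ t0 t1 => (t0.isLeaf ∨ t1.isLeaf) ∧ t0.inputShape ∧ t1.inputShape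

/-- All inferences are proper (ordinary) resolution inferences. -/
def properRes : RTree → Prop
  | leaf _ => True
  | node C x t0 t1 => posLit x ∈ t0.conc ∧ negLit x ∈ t1.conc ∧
      C = Resolvent t0.conc t1.conc x ∧ t0.properRes ∧ t1.properRes

/-- The clauses of the input-derived nodes of a tree (subtrees that are input
resolution proofs). -/
def inputClauses : RTree → Set Clause
  | leaf C => {C}
  | node C x t0 t1 =>
      (if (RTree.node C x t0 t1).inputShape ∧ (RTree.node C x t0 t1).properRes
        then ({C} : Set Clause) else ∅)
      ∪ t0.inputClauses ∪ t1.inputClauses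

/-- Number of non-input-derived nodes. -/
def nonInputCount : RTree → ℕ
  | leaf _ => 0
  | node C x t0 t1 =>
      (if (RTree.node C x t0 t1).inputShape ∧ (RTree.node C x t0 t1).properRes
        then 0 else 1)
      + t0.nonInputCount + t1.nonInputCount

/-- Regularity: no variable is used twice as resolution variable on a path. -/
def regAux : RTree → Set Var → Prop
  | leaf _, _ => True
  | node _ x t0 t1, s => x ∉ s ∧ t0.regAux (insert x s) ∧ t1.regAux (insert x s)

def regular (t : RTree) : Prop := t.regAux ∅

end RTree

/-- An ordinary resolution tree with all leaves labeled by clauses of `F`. -/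
def IsResTreeFrom (F : CNF) : RTree → Prop
  | .leaf C => C ∈ F
  | .node C x t0 t1 => IsResTreeFrom F t0 ∧ IsResTreeFrom F t1 ∧
      posLit x ∈ t0.conc ∧ negLit x ∈ t1.conc ∧ C = Resolvent t0.conc t1.conc x

/-- Resolution tree with input lemmas; `avail` is the set of lemmas available
from earlier (in post-order) input-derived nodes. -/
def IsRTI (F : CNF) : RTree → Set Clause → Prop
  | .leaf C, avail => C ∈ F ∨ C ∈ avail
  | .node C x t0 t1, avail => IsRTI F t0 avail ∧ IsRTI F t1 (avail ∪ t0.inputClauses) ∧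
      posLit x ∈ t0.conc ∧ negLit x ∈ t1.conc ∧ C = Resolvent t0.conc t1.conc x

/-- w-resolution tree with input lemmas. -/
def IsWRTI (F : CNF) : RTree → Set Clause → Prop
  | .leaf C, avail => C ∈ F ∨ C ∈ avail
  | .node C x t0 t1, avail => IsWRTI F t0 avail ∧ IsWRTI F t1 (avail ∪ t0.inputClauses) ∧
      C = Resolvent t0.conc t1.conc x

/-- Resolution tree with (arbitrary earlier) lemmas. -/
def IsRTL (F : CNF) : RTree → Set Clause → Prop
  | .leaf C, avail => C ∈ F ∨ C ∈ avail
  | .node C x t0 t1, avail => IsRTL F t0 avail ∧ IsRTL F t1 (avail ∪ t0.allClauses) ∧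
      posLit x ∈ t0.conc ∧ negLit x ∈ t1.conc ∧ C = Resolvent t0.conc t1.conc x

/-- w-resolution tree with (arbitrary earlier) lemmas. -/
def IsWRTL (F : CNF) : RTree → Set Clause → Prop
  | .leaf C, avail => C ∈ F ∨ C ∈ avail
  | .node C x t0 t1, avail => IsWRTL F t0 avail ∧ IsWRTL F t1 (avail ∪ t0.allClauses) ∧
      C = Resolvent t0.conc t1.conc x

/-- Resolution dags, presented in a topological order; node `n-1` is the conclusion. -/
structure RDag (F : CNF) where
  n : ℕ
  npos : 0 < n
  clause : Fin n → Clause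
  pred : Fin n → Option (Fin n × Fin n × Var)
  topo : ∀ i p, pred i = some p → p.1 < i ∧ p.2.1 < i
  leaf_mem : ∀ i, pred i = none → clause i ∈ F
  res_ok : ∀ i j k x, pred i = some (j, k, x) →
    posLit x ∈ clause j ∧ negLit x ∈ clause k ∧ clause i = Resolvent (clause j) (clause k) x

namespace RDag

variable {F : CNF}

def root (R : RDag F) : Fin R.n := ⟨R.n - 1, Nat.sub_lt R.npos one_pos⟩

def parent (R : RDag F) (j i : Fin R.n) : Prop :=
  ∃ p, R.pred i = some p ∧ (p.1 = j ∨ p.2.1 = j)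

def resVar (R : RDag F) (i : Fin R.n) : Option Var := (R.pred i).map (fun p => p.2.2)

def regular (R : RDag F) : Prop :=
  ∀ i j x, Relation.TransGen R.parent j i → R.resVar i = some x → R.resVar j ≠ some x

/-- `PathLen R i m`: there is a path with `m` edges from some leaf of `R` to `i`. -/
inductive PathLen (R : RDag F) : Fin R.n → ℕ → Prop
  | leaf (i) (h : R.pred i = none) : PathLen R i 0
  | step (i j m) (h : R.parent j i) (hj : PathLen R j m) : PathLen R i (m + 1)

end RDag

/-- w-resolution dags. -/
structure WRDag (F : CNF) where
  n : ℕ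
  npos : 0 < n
  clause : Fin n → Clause
  pred : Fin n → Option (Fin n × Fin n × Var)
  topo : ∀ i p, pred i = some p → p.1 < i ∧ p.2.1 < i
  leaf_mem : ∀ i, pred i = none → clause i ∈ F
  res_ok : ∀ i j k x, pred i = some (j, k, x) →
    clause i = Resolvent (clause j) (clause k) x

namespace WRDag

variable {F : CNF}

def root (R : WRDag F) : Fin R.n := ⟨R.n - 1, Nat.sub_lt R.npos one_pos⟩

def parent (R : WRDag F) (j i : Fin R.n) : Prop :=
  ∃ p, R.pred i = some p ∧ (p.1 = j ∨ p.2.1 = j)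

def resVar (R : WRDag F) (i : Fin R.n) : Option Var := (R.pred i).map (fun p => p.2.2)

def regular (R : WRDag F) : Prop :=
  ∀ i j x, Relation.TransGen R.parent j i → R.resVar i = some x → R.resVar j ≠ some x

def IsRefutation (R : WRDag F) : Prop := R.clause R.root = ∅

/-- `PathLits R v S`: there is a path from `v` to the root of `R` whose set of
edge labels is `S` (the edge from the first premise is labeled `¬x`, from the
second premise `x`). -/
inductive PathLits (R : WRDag F) : Fin R.n → Set Lit → Prop
  | root : PathLits R R.root ∅
  | left (i j k x S) (h : R.pred i = some (j, k, x)) (hi : PathLits R i S) :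
      PathLits R j (insert (negLit x) S)
  | right (i j k x S) (h : R.pred i = some (j, k, x)) (hi : PathLits R i S) :
      PathLits R k (insert (posLit x) S)

end WRDag
/-- A conflict graph for `F` under `α`.  The special node `□` is left implicit:
`x` is the conflict variable, and the edges from `x` and `¬x` to `□` are not
represented. -/
structure ConflictGraph (F : CNF) (α : Assign) where
  V : Finset Lit
  E : Finset (Lit × Lit)
  x : Var
  pos_mem : posLit x ∈ V
  neg_mem : negLit x ∈ V
  uniq : ∀ y, posLit y ∈ V → negLit y ∈ V → y = x
  edges_mem : ∀ e ∈ E, e.1 ∈ V ∧ e.2 ∈ V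
  acyclic : ∃ rank : Lit → ℕ, ∀ e ∈ E, rank e.1 < rank e.2
  leaf_true : ∀ l ∈ V, (∀ e ∈ E, e.2 ≠ l) → α l.1 = some l.2
  internal_clause : ∀ l ∈ V, (∃ e ∈ E, e.2 = l) →
      insert l ((V.filter (fun p => (p, l) ∈ E)).image Lit.neg) ∈ F
  sink : ∀ l ∈ V, (∃ e ∈ E, e.1 = l) ∨ l = posLit x ∨ l = negLit x

namespace ConflictGraph

variable {F : CNF} {α : Assign}

def leaves (G : ConflictGraph F α) : Finset Lit :=
  G.V.filter (fun l => ∀ e ∈ G.E, e.2 ≠ l)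

/-- The conflict clause: negations of the leaf literals. -/
def conflictClause (G : ConflictGraph F α) : Clause := G.leaves.image Lit.neg

def Reach (G : ConflictGraph F α) (a b : Lit) : Prop :=
  Relation.ReflTransGen (fun u v => (u, v) ∈ G.E) a b

/-- The induced clause of a literal `l`. -/
def inducedClause (G : ConflictGraph F α) (l : Lit) : Clause :=
  insert l ((G.leaves.filter (fun p => G.Reach p l)).image Lit.neg)

end ConflictGraph

/-- `H` is a subconflict graph of `G`. -/
def Subconflict {F : CNF} {α : Assign} (H G : ConflictGraph F α) : Prop :=
  H.V ⊆ G.V ∧ H.E ⊆ G.E ∧ H.x = G.x ∧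
  ∀ l ∈ H.V, (∃ e ∈ H.E, e.2 = l) → ∀ e ∈ G.E, e.2 = l → e ∈ H.E

/-- `H` is a proper subconflict graph of `G`: additionally, no path in `G` runs
from a non-leaf vertex of `H` to a leaf of `H`. -/
def ProperSub {F : CNF} {α : Assign} (H G : ConflictGraph F α) : Prop :=
  Subconflict H G ∧
  ∀ l ∈ H.V, (∃ e ∈ H.E, e.2 = l) → ∀ p ∈ H.leaves, ¬ G.Reach l p

def StrictSub {F : CNF} {α : Assign} (H G : ConflictGraph F α) : Prop :=
  Subconflict H G ∧ (H.V ≠ G.V ∨ H.E ≠ G.E)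

/-- A series-parallel decomposition of a conflict graph `G`:
`H i 0 = H_i` for `i ≤ k` and `H i j = H_{i,j}` for `j ≤ m i`. -/
structure SPDecomp {F : CNF} {α : Assign} (G : ConflictGraph F α) where
  k : ℕ
  hk : 1 ≤ k
  m : ℕ → ℕ
  hm : ∀ i < k, 1 ≤ m i
  H : ℕ → ℕ → ConflictGraph F α
  base_V : (H 0 0).V = {posLit G.x, negLit G.x}
  base_E : (H 0 0).E = ∅
  chain : ∀ i < k, ∀ j < m i, StrictSub (H i j) (H i (j + 1))
  proper : ∀ i < k, ∀ j ≤ m i, ProperSub (H i j) G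
  link : ∀ i, i + 1 < k → H i (m i) = H (i + 1) 0
  top : H (k - 1) (m (k - 1)) = G

/-- The learnable clauses of a series-parallel decomposition. -/
def SPDecomp.learnable {F : CNF} {α : Assign} {G : ConflictGraph F α}
    (D : SPDecomp G) : Set Clause :=
  {C | ∃ j, 1 ≤ j ∧ j ≤ D.m 0 ∧ C = (D.H 0 j).conflictClause} ∪
  {C | ∃ i j l, 0 < i ∧ i < D.k ∧ 1 ≤ j ∧ j ≤ D.m i ∧
      l ∈ (D.H i 0).leaves ∧ l ∉ (D.H i j).leaves ∧
      C = (D.H i j).inducedClause l}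

def SPDecomp.isSeries {F : CNF} {α : Assign} {G : ConflictGraph F α}
    (D : SPDecomp G) : Prop := D.k = 1

/-- Executions of the basic DLL algorithm returning UNSAT;
the `ℕ` counts the recursive calls made. -/
inductive DLLUnsat (F : CNF) : Assign → ℕ → Prop
  | conflict (α) (h : CNFFalse F α) : DLLUnsat F α 0
  | branch (α) (x : Var) (ε : Bool) (s0 s1 : ℕ)
      (hnot0 : ¬ CNFFalse F α) (hnot1 : ¬ CNFTrue F α) (hx : α x = none)
      (h0 : DLLUnsat F (α.set x ε) s0) (h1 : DLLUnsat F (α.set x (!ε)) s1) :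
      DLLUnsat F α (s0 + s1 + 2)

/-- Executions of the (non-greedy) DLL-L-UP algorithm returning UNSAT:
`DLLLUP F α s F'` means the call on `(F, α)` returns `(F', UNSAT)` after `s`
recursive calls. -/
inductive DLLLUP : CNF → Assign → ℕ → CNF → Prop
  | conflict (F : CNF) (α : Assign) (G : ConflictGraph F α) (D : SPDecomp G)
      (S : Set Clause) (hS : S ⊆ D.learnable) : DLLLUP F α 0 (F ∪ S)
  | branch (F : CNF) (α : Assign) (x : Var) (ε : Bool) (s0 s1 : ℕ) (F1 F2 : CNF)
      (hx : α x = none)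
      (h0 : DLLLUP F (α.set x ε) s0 F1) (h1 : DLLLUP F1 (α.set x (!ε)) s1 F2) :
      DLLLUP F α (s0 + s1 + 2) F2

/-- Executions of DLL-Learn returning UNSAT: `DLLLearn F α s F' C` means the
call on `(F, α)` returns `(F', UNSAT)` with tagged clause `C` after `s`
recursive calls. -/
inductive DLLLearn : CNF → Assign → ℕ → CNF → Clause → Prop
  | base (F : CNF) (α : Assign) (C : Clause) (hC : C ∈ F) (hf : falsifies α C) :
      DLLLearn F α 0 F C
  | branch (F : CNF) (α : Assign) (x : Var) (ε : Bool) (s0 s1 : ℕ)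
      (F1 F2 : CNF) (C0 C1 : Clause) (hx : α x = none)
      (h0 : DLLLearn F (α.set x ε) s0 F1 C0)
      (h1 : DLLLearn F1 (α.set x (!ε)) s1 F2 C1) :
      DLLLearn F α (s0 + s1 + 2)
        (F2 ∪ {C0.erase (x, !ε) ∪ C1.erase (x, ε)})
        (C0.erase (x, !ε) ∪ C1.erase (x, ε))

/-- Trees of resolution and weakening inferences. -/
inductive WTree where
  | leaf (C : Clause)
  | res (C : Clause) (x : Var) (t0 t1 : WTree)
  | weak (C : Clause) (t : WTree)

namespace WTree

def conc : WTree → Clause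
  | leaf C => C
  | res C _ _ _ => C
  | weak C _ => C

def size : WTree → ℕ
  | leaf _ => 1
  | res _ _ t0 t1 => t0.size + t1.size + 1
  | weak _ t => t.size + 1

def allClauses : WTree → Set Clause
  | leaf C => {C}
  | res C _ t0 t1 => {C} ∪ t0.allClauses ∪ t1.allClauses
  | weak C t => {C} ∪ t.allClauses

def leafClauses : WTree → Set Clause
  | leaf C => {C}
  | res _ _ t0 t1 => t0.leafClauses ∪ t1.leafClauses
  | weak _ t => t.leafClauses

end WTree

/-- Resolution trees with lemmas and weakening, all lemmas of size `≤ k`. -/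
def IsRTLW (F : CNF) (k : ℕ) : WTree → Set Clause → Prop
  | .leaf C, avail => C ∈ F ∨ (C ∈ avail ∧ C.card ≤ k)
  | .res C x t0 t1, avail => IsRTLW F k t0 avail ∧ IsRTLW F k t1 (avail ∪ t0.allClauses) ∧
      posLit x ∈ t0.conc ∧ negLit x ∈ t1.conc ∧ C = Resolvent t0.conc t1.conc x
  | .weak C t, avail => IsRTLW F k t avail ∧ t.conc ⊆ C

def phpVar (n i j : ℕ) : Var := i * n + j

/-- The clauses of the functional pigeonhole principle `FPHP_n`. -/
def FPHP (n : ℕ) : CNF :=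
  {C | ∃ i, 1 ≤ i ∧ i ≤ n + 1 ∧
      C = (Finset.Icc 1 n).image (fun j => posLit (phpVar n i j))} ∪
  {C | ∃ i j k, 1 ≤ i ∧ i < j ∧ j ≤ n + 1 ∧ 1 ≤ k ∧ k ≤ n ∧
      C = {negLit (phpVar n i k), negLit (phpVar n j k)}} ∪
  {C | ∃ i j k, 1 ≤ i ∧ i ≤ n + 1 ∧ 1 ≤ j ∧ j < k ∧ k ≤ n ∧
      C = {negLit (phpVar n i j), negLit (phpVar n i k)}}

/-- The variable extension `VE(F)` with extension variables `q` and `P`. -/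
def VE (F : CNF) (q : Var) (P : Finset Var) : CNF :=
  F ∪ {D | ∃ C ∈ F, ∃ l ∈ C, D = {posLit q, Lit.neg l}} ∪ {P.image posLit}


/-! ### Auxiliary development for stmt19 -/

section Stmt19Aux

/-- In-range pigeon/hole indices. -/
def inR (n i j : ℕ) : Prop := 1 ≤ i ∧ i ≤ n + 1 ∧ 1 ≤ j ∧ j ≤ n

lemma phpVar_inj {n i j i' j' : ℕ} (h : inR n i j) (h' : inR n i' j')
    (e : phpVar n i j = phpVar n i' j') : i = i' ∧ j = j' := by
  obtain ⟨hi1, hi2, hj1, hj2⟩ := h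
  obtain ⟨hi1', hi2', hj1', hj2'⟩ := h'
  unfold phpVar at e
  rcases lt_trichotomy i i' with hlt | heq | hgt
  · exfalso
    have hchain : i * n + j < i' * n + j' := calc
      i * n + j ≤ i * n + n := by exact Nat.add_le_add_left hj2 _
      _ = (i + 1) * n := by ring
      _ ≤ i' * n := Nat.mul_le_mul_right n (by omega)
      _ < i' * n + j' := Nat.lt_add_of_pos_right (by omega)
    exact absurd e hchain.ne
  · subst heq
    exact ⟨rfl, Nat.add_left_cancel e⟩
  · exfalso
    have hchain : i' * n + j' < i * n + j := calc
      i' * n + j' ≤ i' * n + n := by exact Nat.add_le_add_left hj2' _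
      _ = (i' + 1) * n := by ring
      _ ≤ i * n := Nat.mul_le_mul_right n (by omega)
      _ < i * n + j := Nat.lt_add_of_pos_right (by omega)
    exact absurd e hchain.ne' 

/-- A junk variable: not an in-range pigeonhole variable. -/
def Junk (n v : ℕ) : Prop := ¬ ∃ i j, inR n i j ∧ v = phpVar n i j

/-- Leaves that are "free" for the lower-bound argument: clauses containing an
axiom or an in-range tautological pair. -/
def GoodLeaf (n : ℕ) (C : Clause) : Prop :=
  (∃ A ∈ FPHP n, A ⊆ C) ∨
  ∃ i j, inR n i j ∧ posLit (phpVar n i j) ∈ C ∧ negLit (phpVar n i j) ∈ C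

/-- Pure resolution + weakening trees from `GoodLeaf` leaves. -/
def PTree (n : ℕ) : WTree → Prop
  | .leaf C => GoodLeaf n C
  | .res C x t0 t1 => posLit x ∈ t0.conc ∧ negLit x ∈ t1.conc ∧
      C = Resolvent t0.conc t1.conc x ∧ PTree n t0 ∧ PTree n t1
  | .weak C t => t.conc ⊆ C ∧ PTree n t

/-- Invariant: all literals of `C` are falsified, except positive junk ones. -/
def SInv (n : ℕ) (α : Assign) (C : Clause) : Prop :=
  ∀ l ∈ C, α l.1 = some (!l.2) ∨ (l.2 = true ∧ Junk n l.1)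

def matchedP (n : ℕ) (α : Assign) (i : ℕ) : Prop :=
  ∃ j, 1 ≤ j ∧ j ≤ n ∧ α (phpVar n i j) = some true

def occupiedH (n : ℕ) (α : Assign) (j : ℕ) : Prop :=
  ∃ i, 1 ≤ i ∧ i ≤ n + 1 ∧ α (phpVar n i j) = some true

def SGood (n : ℕ) (α : Assign) : Prop :=
  ∀ ⦃i j i' j'⦄, inR n i j → inR n i' j' →
    α (phpVar n i j) = some true → α (phpVar n i' j') = some true → (i = i' ↔ j = j')

open Finset in
/-- Free pigeons. -/
noncomputable def FPs (n : ℕ) (α : Assign) : Finset ℕ :=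
  (Icc 1 (n+1)).filter (fun i => ¬ matchedP n α i)

open Finset in
/-- Available holes for pigeon `i`. -/
noncomputable def Us (n : ℕ) (α : Assign) (i : ℕ) : Finset ℕ :=
  (Icc 1 n).filter (fun j => ¬ occupiedH n α j ∧ α (phpVar n i j) = none)

/-- Candidate products for the potential. -/
def Wset (n : ℕ) (α : Assign) (d : ℕ) : Set ℕ :=
  {p | ∃ I : Finset ℕ, I ⊆ FPs n α ∧ I.card = d ∧ p = ∏ i ∈ I, ((Us n α i).card - d)}

/-- The potential. -/
noncomputable def Wpot (n : ℕ) (α : Assign) (d : ℕ) : ℕ :=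
  if d = 0 then 1 else sInf (Wset n α d)

lemma WTree.one_le_size (t : WTree) : 1 ≤ t.size := by
  cases t <;> simp [WTree.size] <;> omega

end Stmt19Aux

section Stmt19Trans

variable {n : ℕ} {α : Assign}

lemma Assign.set_self (α : Assign) (x : Var) (b : Bool) : (α.set x b) x = some b := by
  simp [Assign.set]

lemma Assign.set_ne (α : Assign) {x v : Var} (b : Bool) (h : v ≠ x) :
    (α.set x b) v = α v := by simp [Assign.set, h]

lemma truths_set_false {x v : Var} (hx : α x = none) :
    ((α.set x false) v = some true) ↔ (α v = some true) := by
  by_cases h : v = x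
  · subst h; simp [Assign.set_self, hx]
  · rw [Assign.set_ne α _ h]

lemma truths_set_true {x v : Var} (hx : α x = none) :
    ((α.set x true) v = some true) ↔ (α v = some true ∨ v = x) := by
  by_cases h : v = x
  · subst h; simp [Assign.set_self, hx]
  · simp [Assign.set_ne α _ h, h]

/-- An in-range variable is `phpVar n i j` for a *unique* in-range pair. -/
lemma inR_var_ne {i j i' j' : ℕ} (h : inR n i j) (h' : inR n i' j')
    (hne : ¬ (i' = i ∧ j' = j)) : phpVar n i' j' ≠ phpVar n i j := by
  intro e
  obtain ⟨e1, e2⟩ := phpVar_inj h' h e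
  exact hne ⟨e1, e2⟩

lemma matchedP_set_false {x : Var} (hx : α x = none) (i'' : ℕ) :
    matchedP n (α.set x false) i'' ↔ matchedP n α i'' := by
  unfold matchedP
  refine exists_congr fun j' => ?_
  rw [and_congr_right_iff, and_congr_right_iff]
  intro _ _
  rw [truths_set_false hx]

lemma occupiedH_set_false {x : Var} (hx : α x = none) (j'' : ℕ) :
    occupiedH n (α.set x false) j'' ↔ occupiedH n α j'' := by
  unfold occupiedH
  refine exists_congr fun i' => ?_
  rw [and_congr_right_iff, and_congr_right_iff]
  intro _ _
  rw [truths_set_false hx]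

open Finset

lemma FPs_set_false {x : Var} (hx : α x = none) : FPs n (α.set x false) = FPs n α := by
  unfold FPs
  apply filter_congr
  intro i'' _
  rw [matchedP_set_false hx]

lemma Us_set_false_other {i j : ℕ} (hr : inR n i j) (hx : α (phpVar n i j) = none)
    {i'' : ℕ} (hi'' : i'' ∈ Icc 1 (n+1)) (hne : i'' ≠ i) :
    Us n (α.set (phpVar n i j) false) i'' = Us n α i'' := by
  unfold Us
  apply filter_congr
  intro j' hj'
  simp only [eq_iff_iff, mem_Icc] at *
  rw [occupiedH_set_false hx]
  have hv : phpVar n i'' j' ≠ phpVar n i j := by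
    apply inR_var_ne hr
    · exact ⟨by omega, by omega, by omega, by omega⟩
    · tauto
  rw [Assign.set_ne α _ hv]

lemma Us_set_false_self {i j : ℕ} (hr : inR n i j) (hx : α (phpVar n i j) = none) :
    Us n (α.set (phpVar n i j) false) i = (Us n α i).erase j := by
  unfold Us
  ext j'
  simp only [mem_erase, mem_filter, mem_Icc]
  constructor
  · rintro ⟨hj', hocc, hnone⟩
    rw [occupiedH_set_false hx] at hocc
    by_cases h : j' = j
    · subst h
      rw [Assign.set_self] at hnone; exact absurd hnone (by simp)
    · have hv : phpVar n i j' ≠ phpVar n i j := by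
        apply inR_var_ne hr
        · exact ⟨hr.1, hr.2.1, by omega, by omega⟩
        · tauto
      rw [Assign.set_ne α _ hv] at hnone
      exact ⟨h, hj', hocc, hnone⟩
  · rintro ⟨h, hj', hocc, hnone⟩
    rw [occupiedH_set_false hx]
    have hv : phpVar n i j' ≠ phpVar n i j := by
      apply inR_var_ne hr
      · exact ⟨hr.1, hr.2.1, by omega, by omega⟩
      · tauto
    rw [Assign.set_ne α _ hv]
    exact ⟨hj', hocc, hnone⟩

lemma Us_set_false_occupied {i j : ℕ} (hr : inR n i j) (hx : α (phpVar n i j) = none)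
    (ho : occupiedH n α j) {i'' : ℕ} (hi'' : i'' ∈ Icc 1 (n+1)) :
    Us n (α.set (phpVar n i j) false) i'' = Us n α i'' := by
  by_cases hne : i'' = i
  · subst hne
    rw [Us_set_false_self hr hx]
    apply (erase_eq_of_notMem ?_).trans rfl
    intro hmem
    unfold Us at hmem
    rw [mem_filter] at hmem
    exact hmem.2.1 ho
  · exact Us_set_false_other hr hx hi'' hne

lemma matchedP_set_true {i j : ℕ} (hr : inR n i j) (hx : α (phpVar n i j) = none)
    {i'' : ℕ} (hi'' : i'' ∈ Icc 1 (n+1)) :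
    matchedP n (α.set (phpVar n i j) true) i'' ↔ (matchedP n α i'' ∨ i'' = i) := by
  rw [mem_Icc] at hi''
  constructor
  · rintro ⟨j', hj1, hj2, htr⟩
    rw [truths_set_true hx] at htr
    rcases htr with h | h
    · exact Or.inl ⟨j', hj1, hj2, h⟩
    · right
      exact (phpVar_inj ⟨by omega, by omega, hj1, hj2⟩ hr h).1
  · rintro (⟨j', hj1, hj2, htr⟩ | rfl)
    · exact ⟨j', hj1, hj2, by rw [truths_set_true hx]; exact Or.inl htr⟩
    · exact ⟨j, hr.2.2.1, hr.2.2.2, by rw [truths_set_true hx]; exact Or.inr rfl⟩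

lemma occupiedH_set_true {i j : ℕ} (hr : inR n i j) (hx : α (phpVar n i j) = none)
    {j'' : ℕ} (hj'' : j'' ∈ Icc 1 n) :
    occupiedH n (α.set (phpVar n i j) true) j'' ↔ (occupiedH n α j'' ∨ j'' = j) := by
  rw [mem_Icc] at hj''
  constructor
  · rintro ⟨i', hi1, hi2, htr⟩
    rw [truths_set_true hx] at htr
    rcases htr with h | h
    · exact Or.inl ⟨i', hi1, hi2, h⟩
    · right
      exact (phpVar_inj ⟨hi1, hi2, by omega, by omega⟩ hr h).2
  · rintro (⟨i', hi1, hi2, htr⟩ | rfl)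
    · exact ⟨i', hi1, hi2, by rw [truths_set_true hx]; exact Or.inl htr⟩
    · exact ⟨i, hr.1, hr.2.1, by rw [truths_set_true hx]; exact Or.inr rfl⟩

lemma FPs_set_true {i j : ℕ} (hr : inR n i j) (hx : α (phpVar n i j) = none) :
    FPs n (α.set (phpVar n i j) true) = (FPs n α).erase i := by
  unfold FPs
  ext i''
  simp only [mem_erase, mem_filter]
  constructor
  · rintro ⟨hi'', hm⟩
    rw [matchedP_set_true hr hx hi''] at hm
    push_neg at hm
    exact ⟨hm.2, hi'', hm.1⟩
  · rintro ⟨hne, hi'', hm⟩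
    refine ⟨hi'', ?_⟩
    rw [matchedP_set_true hr hx hi'']
    tauto

lemma Us_set_true_other {i j : ℕ} (hr : inR n i j) (hx : α (phpVar n i j) = none)
    {i'' : ℕ} (hi'' : i'' ∈ Icc 1 (n+1)) (hne : i'' ≠ i) :
    Us n (α.set (phpVar n i j) true) i'' = (Us n α i'').erase j := by
  unfold Us
  ext j'
  simp only [mem_erase, mem_filter, mem_Icc] at *
  constructor
  · rintro ⟨hj', hocc, hnone⟩
    rw [occupiedH_set_true hr hx (by rw [mem_Icc]; omega)] at hocc
    push_neg at hocc
    have hv : phpVar n i'' j' ≠ phpVar n i j := by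
      apply inR_var_ne hr ⟨by omega, by omega, by omega, by omega⟩; tauto
    rw [Assign.set_ne α _ hv] at hnone
    exact ⟨hocc.2, hj', hocc.1, hnone⟩
  · rintro ⟨hjne, hj', hocc, hnone⟩
    have hv : phpVar n i'' j' ≠ phpVar n i j := by
      apply inR_var_ne hr ⟨by omega, by omega, by omega, by omega⟩; tauto
    rw [Assign.set_ne α _ hv]
    refine ⟨hj', ?_, hnone⟩
    rw [occupiedH_set_true hr hx (by rw [mem_Icc]; omega)]
    tauto

lemma SGood_set_false {x : Var} (hx : α x = none) (hG : SGood n α) :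
    SGood n (α.set x false) := by
  intro i j i' j' h h' ht ht'
  rw [truths_set_false hx] at ht ht'
  exact hG h h' ht ht'

lemma SGood_set_true {i j : ℕ} (hr : inR n i j) (hx : α (phpVar n i j) = none)
    (hm : ¬ matchedP n α i) (ho : ¬ occupiedH n α j) (hG : SGood n α) :
    SGood n (α.set (phpVar n i j) true) := by
  intro a b a' b' h h' ht ht'
  rw [truths_set_true hx] at ht ht'
  rcases ht with ht | ht <;> rcases ht' with ht' | ht'
  · exact hG h h' ht ht'
  · obtain ⟨rfl, rfl⟩ := phpVar_inj h' hr ht'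
    constructor
    · rintro rfl; exact absurd ⟨b, h.2.2.1, h.2.2.2, ht⟩ hm
    · rintro rfl; exact absurd ⟨a, h.1, h.2.1, ht⟩ ho
  · obtain ⟨rfl, rfl⟩ := phpVar_inj h hr ht
    constructor
    · rintro rfl; exact absurd ⟨b', h'.2.2.1, h'.2.2.2, ht'⟩ hm
    · rintro rfl; exact absurd ⟨a', h'.1, h'.2.1, ht'⟩ ho
  · obtain ⟨rfl, rfl⟩ := phpVar_inj h hr ht
    obtain ⟨e1, e2⟩ := phpVar_inj h' hr ht'
    omega

/-- Junk variables never affect the state. -/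
lemma state_set_junk {x : Var} (hj : Junk n x) (b : Bool) :
    FPs n (α.set x b) = FPs n α ∧
      ∀ i'' ∈ Icc 1 (n+1), Us n (α.set x b) i'' = Us n α i'' := by
  have key : ∀ i'' j', 1 ≤ i'' → i'' ≤ n + 1 → 1 ≤ j' → j' ≤ n →
      (α.set x b) (phpVar n i'' j') = α (phpVar n i'' j') := by
    intro i'' j' h1 h2 h3 h4
    apply Assign.set_ne
    intro e
    exact hj ⟨i'', j', ⟨h1, h2, h3, h4⟩, e.symm⟩
  constructor
  · unfold FPs
    apply filter_congr
    intro i'' hi''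
    rw [mem_Icc] at hi''
    unfold matchedP
    refine not_congr (exists_congr fun j' => ?_)
    rw [and_congr_right_iff, and_congr_right_iff]
    intro hj1 hj2
    rw [key i'' j' (by omega) (by omega) hj1 hj2]
  · intro i'' hi''
    rw [mem_Icc] at hi''
    unfold Us
    apply filter_congr
    intro j' hj'
    rw [mem_Icc] at hj'
    constructor
    · rintro ⟨hocc, hnone⟩
      rw [key i'' j' (by omega) (by omega) (by omega) (by omega)] at hnone
      refine ⟨?_, hnone⟩
      intro ⟨i', h1, h2, h3⟩
      exact hocc ⟨i', h1, h2, by rw [key i' j' h1 h2 (by omega) (by omega)]; exact h3⟩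
    · rintro ⟨hocc, hnone⟩
      rw [← key i'' j' (by omega) (by omega) (by omega) (by omega)] at hnone
      refine ⟨?_, hnone⟩
      intro ⟨i', h1, h2, h3⟩
      rw [key i' j' h1 h2 (by omega) (by omega)] at h3
      exact hocc ⟨i', h1, h2, h3⟩

lemma SGood_set_junk {x : Var} (hj : Junk n x) (b : Bool) (hG : SGood n α) :
    SGood n (α.set x b) := by
  intro i j i' j' h h' ht ht'
  have k1 : (α.set x b) (phpVar n i j) = α (phpVar n i j) := by
    apply Assign.set_ne; intro e; exact hj ⟨i, j, h, e.symm⟩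
  have k2 : (α.set x b) (phpVar n i' j') = α (phpVar n i' j') := by
    apply Assign.set_ne; intro e; exact hj ⟨i', j', h', e.symm⟩
  rw [k1] at ht; rw [k2] at ht'
  exact hG h h' ht ht'

lemma Wpot_congr {α' : Assign} (h1 : FPs n α' = FPs n α)
    (h2 : ∀ i ∈ FPs n α, Us n α' i = Us n α i) (d : ℕ) :
    Wpot n α' d = Wpot n α d := by
  unfold Wpot
  rcases Nat.eq_zero_or_pos d with rfl | hd
  · simp
  · rw [if_neg (by omega), if_neg (by omega)]
    congr 1
    unfold Wset
    ext p
    constructor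
    · rintro ⟨I, hsub, hcard, rfl⟩
      rw [h1] at hsub
      exact ⟨I, hsub, hcard, Finset.prod_congr rfl fun i hi => by
        rw [h2 i (hsub hi)]⟩
    · rintro ⟨I, hsub, hcard, rfl⟩
      refine ⟨I, by rw [h1]; exact hsub, hcard, Finset.prod_congr rfl fun i hi => by
        rw [h2 i (hsub hi)]⟩

end Stmt19Trans

section Stmt19Pot

variable {n : ℕ} {α : Assign}

open Finset

lemma Wpot_le_one_of_dead {i : ℕ} (hi : i ∈ FPs n α) (hU : (Us n α i).card = 0)
    (d : ℕ) : Wpot n α d ≤ 1 := by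
  unfold Wpot
  rcases Nat.eq_zero_or_pos d with rfl | hd
  · simp
  · rw [if_neg (by omega)]
    rcases (Wset n α d).eq_empty_or_nonempty with he | hne
    · rw [he, Nat.sInf_empty]; omega
    · obtain ⟨p, I, hsub, hcard, hp⟩ := hne
      have h1 : Wpot n α d ≤ 0 := by
        unfold Wpot
        rw [if_neg (by omega)]
        by_cases hiI : i ∈ I
        · apply Nat.sInf_le
          refine ⟨I, hsub, hcard, ?_⟩
          rw [Finset.prod_eq_zero hiI (by rw [hU]; simp)]
        · have hIne : I.Nonempty := Finset.card_pos.mp (by omega)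
          obtain ⟨a, ha⟩ := hIne
          apply Nat.sInf_le
          refine ⟨insert i (I.erase a), ?_, ?_, ?_⟩
          · exact Finset.insert_subset hi ((Finset.erase_subset _ _).trans hsub)
          · rw [Finset.card_insert_of_notMem (fun h => hiI (Finset.erase_subset _ _ h)),
              Finset.card_erase_of_mem ha]
            omega
          · rw [Finset.prod_eq_zero (Finset.mem_insert_self i _) (by rw [hU]; simp)]
      unfold Wpot at h1
      rw [if_neg (by omega)] at h1
      omega

lemma W2 {i j : ℕ} (hi : i ∈ FPs n α) (hj : j ∈ Us n α i) {d : ℕ} (hd : 1 ≤ d) :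
    Wpot n α d ≤ Wpot n (α.set (phpVar n i j) false) d +
      Wpot n (α.set (phpVar n i j) true) (d - 1) := by
  have hiIcc : i ∈ Icc 1 (n+1) := (Finset.mem_filter.mp hi).1
  have hjIcc : j ∈ Icc 1 n := (Finset.mem_filter.mp hj).1
  have hr : inR n i j := by
    rw [mem_Icc] at hiIcc hjIcc; exact ⟨hiIcc.1, hiIcc.2, hjIcc.1, hjIcc.2⟩
  have hx : α (phpVar n i j) = none := (Finset.mem_filter.mp hj).2.2
  set α0 := α.set (phpVar n i j) false with hα0
  set α1 := α.set (phpVar n i j) true with hα1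
  have hFP0 : FPs n α0 = FPs n α := FPs_set_false hx
  have hUo : ∀ i'' ∈ FPs n α, i'' ≠ i → Us n α0 i'' = Us n α i'' := fun i'' h hne =>
    Us_set_false_other hr hx (Finset.mem_filter.mp h).1 hne
  have hUs : Us n α0 i = (Us n α i).erase j := Us_set_false_self hr hx
  have hFP1 : FPs n α1 = (FPs n α).erase i := FPs_set_true hr hx
  have hU1 : ∀ i'' ∈ FPs n α, i'' ≠ i → Us n α1 i'' = (Us n α i'').erase j := fun i'' h hne =>
    Us_set_true_other hr hx (Finset.mem_filter.mp h).1 hne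
  by_cases hWe : (Wset n α d) = ∅
  · unfold Wpot
    rw [if_neg (by omega), hWe, Nat.sInf_empty]
    exact Nat.zero_le _
  · have hne0 : (Wset n α0 d).Nonempty := by
      obtain ⟨p, I, h1, h2, _⟩ := Set.nonempty_iff_ne_empty.mpr hWe
      exact ⟨_, I, by rw [hFP0]; exact h1, h2, rfl⟩
    obtain ⟨I0, hI0sub, hI0card, hI0p⟩ := Nat.sInf_mem hne0
    rw [hFP0] at hI0sub
    by_cases hiI : i ∈ I0
    · -- main case
      set Vs : Set ℕ :=
        {p | ∃ J : Finset ℕ, J ⊆ (FPs n α).erase i ∧ J.card = d - 1 ∧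
          p = ∏ i' ∈ J, ((Us n α i').card - d)} with hVs
      have hVne : Vs.Nonempty :=
        ⟨_, I0.erase i, Finset.erase_subset_erase i hI0sub,
          by rw [Finset.card_erase_of_mem hiI, hI0card], rfl⟩
      set V := sInf Vs with hV
      set ci := (Us n α i).card with hci
      have claim1 : Wpot n α d ≤ (ci - d) * V := by
        obtain ⟨J0, hJ0sub, hJ0card, hJ0p⟩ := Nat.sInf_mem hVne
        have hiJ0 : i ∉ J0 := fun h => (Finset.mem_erase.mp (hJ0sub h)).1 rfl
        unfold Wpot
        rw [if_neg (by omega)]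
        apply Nat.sInf_le
        refine ⟨insert i J0, ?_, ?_, ?_⟩
        · exact Finset.insert_subset hi (hJ0sub.trans (Finset.erase_subset _ _))
        · rw [Finset.card_insert_of_notMem hiJ0, hJ0card]; omega
        · rw [Finset.prod_insert hiJ0, ← hJ0p]
      have claim2 : (ci - d - 1) * V ≤ Wpot n α0 d := by
        unfold Wpot
        rw [if_neg (by omega), hI0p, ← Finset.mul_prod_erase _ _ hiI]
        apply Nat.mul_le_mul
        · rw [hUs, Finset.card_erase_of_mem hj, ← hci]
          omega
        · have heq : ∏ i' ∈ I0.erase i, ((Us n α0 i').card - d) =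
              ∏ i' ∈ I0.erase i, ((Us n α i').card - d) := by
            apply Finset.prod_congr rfl
            intro i'' hi''
            rw [hUo i'' (hI0sub (Finset.erase_subset _ _ hi''))
              (Finset.mem_erase.mp hi'').1]
          rw [heq]
          exact Nat.sInf_le ⟨I0.erase i, Finset.erase_subset_erase i hI0sub,
            by rw [Finset.card_erase_of_mem hiI, hI0card], rfl⟩
      have claim3 : V ≤ Wpot n α1 (d - 1) := by
        rcases Nat.eq_zero_or_pos (d - 1) with h0 | hpos
        · unfold Wpot
          rw [if_pos h0]
          exact Nat.sInf_le ⟨∅, Finset.empty_subset _, by simp [h0], by simp⟩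
        · have hne1 : (Wset n α1 (d-1)).Nonempty :=
            ⟨_, I0.erase i, by rw [hFP1]; exact Finset.erase_subset_erase i hI0sub,
              by rw [Finset.card_erase_of_mem hiI, hI0card], rfl⟩
          obtain ⟨I1, hI1sub, hI1card, hI1p⟩ := Nat.sInf_mem hne1
          unfold Wpot
          rw [if_neg (by omega), hI1p]
          rw [hFP1] at hI1sub
          calc V ≤ ∏ i' ∈ I1, ((Us n α i').card - d) :=
                Nat.sInf_le ⟨I1, hI1sub, hI1card, rfl⟩
            _ ≤ ∏ i' ∈ I1, ((Us n α1 i').card - (d-1)) := by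
                apply Finset.prod_le_prod'
                intro i'' hi''
                have hmem := Finset.mem_erase.mp (hI1sub hi'')
                rw [hU1 i'' hmem.2 hmem.1]
                have := Finset.pred_card_le_card_erase (s := Us n α i'') (a := j)
                omega
      calc Wpot n α d ≤ (ci - d) * V := claim1
        _ ≤ ((ci - d - 1) + 1) * V := Nat.mul_le_mul_right V (by omega)
        _ = (ci - d - 1) * V + V := by ring
        _ ≤ Wpot n α0 d + Wpot n α1 (d - 1) := add_le_add claim2 claim3
    · -- i ∉ I0 : the zero-child alone suffices
      have h1 : Wpot n α d ≤ Wpot n α0 d := by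
        unfold Wpot
        rw [if_neg (by omega), if_neg (by omega), hI0p]
        apply Nat.sInf_le
        refine ⟨I0, hI0sub, hI0card, ?_⟩
        apply Finset.prod_congr rfl
        intro i'' hi''
        rw [hUo i'' (hI0sub hi'') (fun e => hiI (e ▸ hi''))]
      exact le_trans h1 (Nat.le_add_right _ _)

end Stmt19Pot

section Stmt19Phase1

variable {n : ℕ} {α : Assign}

open Finset

lemma mem_resolvent_left {C0 C1 : Clause} {x : Var} {l : Lit} (h : l ∈ C0)
    (hne : l ≠ posLit x) : l ∈ Resolvent C0 C1 x :=
  Finset.mem_union_left _ (Finset.mem_erase.mpr ⟨hne, h⟩)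

lemma mem_resolvent_right {C0 C1 : Clause} {x : Var} {l : Lit} (h : l ∈ C1)
    (hne : l ≠ negLit x) : l ∈ Resolvent C0 C1 x :=
  Finset.mem_union_right _ (Finset.mem_erase.mpr ⟨hne, h⟩)

lemma SInv_left {C c0 c1 : Clause} {x : Var} (hInv : SInv n α C)
    (hres : C = Resolvent c0 c1 x) (hnegnot : negLit x ∉ c0) (hαx : α x = none) :
    SInv n (α.set x false) c0 := by
  intro l hl
  by_cases h1 : l = posLit x
  · subst h1; left; simp [posLit, Assign.set_self]
  · have hlC : l ∈ C := by rw [hres]; exact mem_resolvent_left hl h1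
    have hne : l.1 ≠ x := by
      intro e
      rcases l with ⟨v, b⟩
      simp only at e
      subst e
      cases b
      · exact hnegnot hl
      · exact h1 rfl
    rcases hInv l hlC with h | h
    · left; rw [Assign.set_ne α _ hne]; exact h
    · right; exact h

lemma SInv_right {C c0 c1 : Clause} {x : Var} (hInv : SInv n α C)
    (hres : C = Resolvent c0 c1 x) (hposnot : posLit x ∉ c1 ∨ Junk n x)
    (hαx : α x = none) : SInv n (α.set x true) c1 := by
  intro l hl
  by_cases h1 : l = negLit x
  · subst h1; left; simp [negLit, Assign.set_self]
  · by_cases h2 : l = posLit x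
    · subst h2
      rcases hposnot with h | h
      · exact absurd hl h
      · right; exact ⟨rfl, h⟩
    · have hlC : l ∈ C := by rw [hres]; exact mem_resolvent_right hl h1
      have hne : l.1 ≠ x := by
        intro e
        rcases l with ⟨v, b⟩
        simp only at e
        subst e
        cases b
        · exact h1 rfl
        · exact h2 rfl
      rcases hInv l hlC with h | h
      · left; rw [Assign.set_ne α _ hne]; exact h
      · right; exact h

lemma phase1_leaf {C : Clause} (hGL : GoodLeaf n C) (hInv : SInv n α C)
    (hG : SGood n α) (d : ℕ) : Wpot n α d ≤ 1 := by
  rcases hGL with ⟨A, hA, hsub⟩ | ⟨i, j, hr, hpos, hneg⟩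
  · rcases hA with (h | h) | h
    · -- pigeon clause: dead row
      obtain ⟨i, hi1, hi2, rfl⟩ := h
      have hfalse : ∀ j, 1 ≤ j → j ≤ n → α (phpVar n i j) = some false := by
        intro j hj1 hj2
        have hmem : posLit (phpVar n i j) ∈ C := hsub (Finset.mem_image.mpr
          ⟨j, Finset.mem_Icc.mpr ⟨hj1, hj2⟩, rfl⟩)
        rcases hInv _ hmem with h | h
        · simpa [posLit] using h
        · exact absurd ⟨i, j, ⟨hi1, hi2, hj1, hj2⟩, rfl⟩ h.2
      have hiFP : i ∈ FPs n α := by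
        refine Finset.mem_filter.mpr ⟨Finset.mem_Icc.mpr ⟨hi1, hi2⟩, ?_⟩
        rintro ⟨j', hj1, hj2, htr⟩
        rw [hfalse j' hj1 hj2] at htr
        simp at htr
      have hU : (Us n α i).card = 0 := by
        rw [Finset.card_eq_zero]
        rw [Finset.eq_empty_iff_forall_notMem]
        intro j' hj'
        obtain ⟨hjIcc, _, hnone⟩ := Finset.mem_filter.mp hj'
        rw [Finset.mem_Icc] at hjIcc
        rw [hfalse j' hjIcc.1 hjIcc.2] at hnone
        simp at hnone
      exact Wpot_le_one_of_dead hiFP hU d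
    · -- hole clause: contradiction with SGood
      obtain ⟨i, j, k, hi1, hij, hj2, hk1, hk2, rfl⟩ := h
      have h1 : α (phpVar n i k) = some true := by
        have hmem : negLit (phpVar n i k) ∈ C := hsub (by simp)
        rcases hInv _ hmem with h | h
        · simpa [negLit] using h
        · simp [negLit] at h
      have h2 : α (phpVar n j k) = some true := by
        have hmem : negLit (phpVar n j k) ∈ C := hsub (by simp)
        rcases hInv _ hmem with h | h
        · simpa [negLit] using h
        · simp [negLit] at h
      have := hG (i := i) (j := k) (i' := j) (j' := k)
        ⟨hi1, by omega, hk1, hk2⟩ ⟨by omega, hj2, hk1, hk2⟩ h1 h2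
      omega
    · -- functional clause: contradiction with SGood
      obtain ⟨i, j, k, hi1, hi2, hj1, hjk, hk2, rfl⟩ := h
      have h1 : α (phpVar n i j) = some true := by
        have hmem : negLit (phpVar n i j) ∈ C := hsub (by simp)
        rcases hInv _ hmem with h | h
        · simpa [negLit] using h
        · simp [negLit] at h
      have h2 : α (phpVar n i k) = some true := by
        have hmem : negLit (phpVar n i k) ∈ C := hsub (by simp)
        rcases hInv _ hmem with h | h
        · simpa [negLit] using h
        · simp [negLit] at h
      have := hG (i := i) (j := j) (i' := i) (j' := k)
        ⟨hi1, hi2, hj1, by omega⟩ ⟨hi1, hi2, by omega, hk2⟩ h1 h2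
      omega
  · -- tautological in-range pair: contradiction
    have h1 : α (phpVar n i j) = some false := by
      rcases hInv _ hpos with h | h
      · simpa [posLit] using h
      · exact absurd ⟨i, j, hr, rfl⟩ h.2
    have h2 : α (phpVar n i j) = some true := by
      rcases hInv _ hneg with h | h
      · simpa [negLit] using h
      · simp [negLit] at h
    rw [h1] at h2
    simp at h2

theorem phase1 {n : ℕ} : ∀ t : WTree, PTree n t → ∀ (α : Assign) (d : ℕ),
    SGood n α → SInv n α t.conc → Wpot n α d ≤ t.size := by
  intro t
  induction t with
  | leaf C =>
    intro hPT α d hG hInv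
    exact le_trans (phase1_leaf hPT hInv hG d) (WTree.one_le_size _)
  | weak C s ih =>
    intro hPT α d hG hInv
    obtain ⟨hsub, hp⟩ := hPT
    have hInv' : SInv n α s.conc := fun l hl => hInv l (hsub hl)
    calc Wpot n α d ≤ s.size := ih hp α d hG hInv'
      _ ≤ (WTree.weak C s).size := by simp [WTree.size]
  | res C x t0 t1 ih0 ih1 =>
    intro hPT α d hG hInv
    obtain ⟨hpos, hneg, hres, hp0, hp1⟩ := hPT
    have hsize : (WTree.res C x t0 t1).size = t0.size + t1.size + 1 := rfl
    have hconc : (WTree.res C x t0 t1).conc = C := rfl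
    rw [hconc] at hInv
    match hαx : α x with
    | some true =>
      have hInv1 : SInv n α t1.conc := by
        intro l hl
        by_cases h1 : l = negLit x
        · subst h1; left; show α x = some true; exact hαx
        · exact hInv l (by rw [hres]; exact mem_resolvent_right hl h1)
      calc Wpot n α d ≤ t1.size := ih1 hp1 α d hG hInv1
        _ ≤ _ := by rw [hsize]; omega
    | some false =>
      have hInv0 : SInv n α t0.conc := by
        intro l hl
        by_cases h1 : l = posLit x
        · subst h1; left; show α x = some false; exact hαx
        · exact hInv l (by rw [hres]; exact mem_resolvent_left hl h1)
      calc Wpot n α d ≤ t0.size := ih0 hp0 α d hG hInv0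
        _ ≤ _ := by rw [hsize]; omega
    | none =>
      have hnegnot : negLit x ∉ t0.conc := by
        intro hmem
        have hlC : negLit x ∈ C := by
          rw [hres]
          exact mem_resolvent_left hmem (by simp [negLit, posLit])
        rcases hInv _ hlC with h | h
        · rw [show (negLit x).1 = x from rfl, hαx] at h; simp at h
        · simp [negLit] at h
      by_cases hin : ∃ i j, inR n i j ∧ x = phpVar n i j
      · obtain ⟨i, j, hr, rfl⟩ := hin
        have hposnot1 : posLit (phpVar n i j) ∉ t1.conc := by
          intro hmem
          have hlC : posLit (phpVar n i j) ∈ C := by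
            rw [hres]
            exact mem_resolvent_right hmem (by simp [negLit, posLit])
          rcases hInv _ hlC with h | h
          · rw [show (posLit (phpVar n i j)).1 = phpVar n i j from rfl, hαx] at h
            simp at h
          · exact h.2 ⟨i, j, hr, rfl⟩
        have hIccI : i ∈ Icc 1 (n+1) := Finset.mem_Icc.mpr ⟨hr.1, hr.2.1⟩
        by_cases hm : matchedP n α i
        · -- pigeon already matched: forced 0, go left
          have hInv0 := SInv_left hInv hres hnegnot hαx
          have hG0 := SGood_set_false hαx hG
          have hW : Wpot n (α.set (phpVar n i j) false) d = Wpot n α d := by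
            apply Wpot_congr (FPs_set_false hαx)
            intro i'' hi''
            have hI : i'' ∈ Icc 1 (n+1) := (Finset.mem_filter.mp hi'').1
            have hne : i'' ≠ i := by
              rintro rfl
              exact (Finset.mem_filter.mp hi'').2 hm
            exact Us_set_false_other hr hαx hI hne
          calc Wpot n α d = Wpot n (α.set (phpVar n i j) false) d := hW.symm
            _ ≤ t0.size := ih0 hp0 _ d hG0 hInv0
            _ ≤ _ := by rw [hsize]; omega
        · by_cases ho : occupiedH n α j
          · -- hole occupied: forced 0, go left
            have hInv0 := SInv_left hInv hres hnegnot hαx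
            have hG0 := SGood_set_false hαx hG
            have hW : Wpot n (α.set (phpVar n i j) false) d = Wpot n α d := by
              apply Wpot_congr (FPs_set_false hαx)
              intro i'' hi''
              exact Us_set_false_occupied hr hαx ho (Finset.mem_filter.mp hi'').1
            calc Wpot n α d = Wpot n (α.set (phpVar n i j) false) d := hW.symm
              _ ≤ t0.size := ih0 hp0 _ d hG0 hInv0
              _ ≤ _ := by rw [hsize]; omega
          · -- the deferred query
            rcases Nat.eq_zero_or_pos d with rfl | hd
            · calc Wpot n α 0 = 1 := by rw [Wpot, if_pos rfl]
                _ ≤ _ := WTree.one_le_size _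
            · have hiFP : i ∈ FPs n α := Finset.mem_filter.mpr ⟨hIccI, hm⟩
              have hjU : j ∈ Us n α i := Finset.mem_filter.mpr
                ⟨Finset.mem_Icc.mpr ⟨hr.2.2.1, hr.2.2.2⟩, ho, hαx⟩
              have hInv0 := SInv_left hInv hres hnegnot hαx
              have hG0 := SGood_set_false hαx hG
              have hInv1 := SInv_right hInv hres (Or.inl hposnot1) hαx
              have hG1 := SGood_set_true hr hαx hm ho hG
              calc Wpot n α d ≤ Wpot n (α.set (phpVar n i j) false) d +
                    Wpot n (α.set (phpVar n i j) true) (d - 1) := W2 hiFP hjU hd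
                _ ≤ t0.size + t1.size :=
                    add_le_add (ih0 hp0 _ d hG0 hInv0) (ih1 hp1 _ (d-1) hG1 hInv1)
                _ ≤ _ := by rw [hsize]; omega
      · -- junk variable: go right with value true
        have hjunk : Junk n x := hin
        have hInv1 := SInv_right hInv hres (Or.inr hjunk) hαx
        have hG1 := SGood_set_junk hjunk true hG
        have hW : Wpot n (α.set x true) d = Wpot n α d := by
          obtain ⟨hF, hU⟩ := state_set_junk (α := α) hjunk true
          apply Wpot_congr hF
          intro i'' hi''
          exact hU i'' (Finset.mem_filter.mp hi'').1
        calc Wpot n α d = Wpot n (α.set x true) d := hW.symm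
          _ ≤ t1.size := ih1 hp1 _ d hG1 hInv1
          _ ≤ _ := by rw [hsize]; omega

end Stmt19Phase1

section Stmt19Extract

lemma WTree.conc_mem_allClauses (t : WTree) : t.conc ∈ t.allClauses := by
  cases t with
  | leaf C => exact rfl
  | res C x t0 t1 => exact Or.inl (Or.inl rfl)
  | weak C s => exact Or.inl rfl

theorem extract_pure {n k N : ℕ} :
    ∀ (t : WTree) (avail : Set Clause), IsRTLW (FPHP n) k t avail → t.size ≤ N →
    (∀ D ∈ avail, D.card ≤ k → ¬ GoodLeaf n D →
      ∃ td : WTree, PTree n td ∧ td.conc = D ∧ td.size ≤ N) →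
    (∀ D ∈ t.allClauses, ∃ td : WTree, PTree n td ∧ td.conc = D ∧ td.size ≤ t.size) ∨
    (∃ (C : Clause) (td : WTree), PTree n td ∧ td.conc = C ∧ td.size ≤ N ∧
      C.card ≤ k ∧ ¬ GoodLeaf n C) := by
  intro t
  induction t with
  | leaf C =>
    intro avail ht hsz hAvail
    by_cases hGL : GoodLeaf n C
    · left
      intro D hD
      have hDC : D = C := hD
      subst hDC
      exact ⟨WTree.leaf D, hGL, rfl, le_refl _⟩
    · rcases ht with hF | ⟨hmem, hcard⟩
      · exact absurd (Or.inl ⟨C, hF, subset_rfl⟩) hGL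
      · right
        obtain ⟨td, h1, h2, h3⟩ := hAvail C hmem hcard hGL
        exact ⟨C, td, h1, h2, h3, hcard, hGL⟩
  | res C x t0 t1 ih0 ih1 =>
    intro avail ht hsz hAvail
    obtain ⟨h0, h1, hpos, hneg, hres⟩ := ht
    have hsize : (WTree.res C x t0 t1).size = t0.size + t1.size + 1 := rfl
    rcases ih0 avail h0 (by omega) hAvail with H0 | H0
    · have hAvail' : ∀ D ∈ avail ∪ t0.allClauses, D.card ≤ k → ¬ GoodLeaf n D →
          ∃ td : WTree, PTree n td ∧ td.conc = D ∧ td.size ≤ N := by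
        intro D hD hcard hGL
        rcases hD with hD | hD
        · exact hAvail D hD hcard hGL
        · obtain ⟨td, ha, hb, hc⟩ := H0 D hD
          exact ⟨td, ha, hb, by omega⟩
      rcases ih1 (avail ∪ t0.allClauses) h1 (by omega) hAvail' with H1 | H1
      · left
        intro D hD
        rcases hD with (hD | hD) | hD
        · have hDC : D = C := hD
          subst hDC
          obtain ⟨td0, hP0, hc0, hs0⟩ := H0 t0.conc (WTree.conc_mem_allClauses t0)
          obtain ⟨td1, hP1, hc1, hs1⟩ := H1 t1.conc (WTree.conc_mem_allClauses t1)
          refine ⟨WTree.res D x td0 td1, ?_, rfl, ?_⟩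
          · exact ⟨by rw [hc0]; exact hpos, by rw [hc1]; exact hneg,
              by rw [hc0, hc1]; exact hres, hP0, hP1⟩
          · show td0.size + td1.size + 1 ≤ _
            omega
        · obtain ⟨td, ha, hb, hc⟩ := H0 D hD
          exact ⟨td, ha, hb, by omega⟩
        · obtain ⟨td, ha, hb, hc⟩ := H1 D hD
          exact ⟨td, ha, hb, by omega⟩
      · exact Or.inr H1
    · exact Or.inr H0
  | weak C s ih =>
    intro avail ht hsz hAvail
    obtain ⟨hIs, hsub⟩ := ht
    have hsize : (WTree.weak C s).size = s.size + 1 := rfl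
    rcases ih avail hIs (by omega) hAvail with H | H
    · left
      intro D hD
      rcases hD with hD | hD
      · have hDC : D = C := hD
        subst hDC
        obtain ⟨td, hP, hc, hs⟩ := H s.conc (WTree.conc_mem_allClauses s)
        refine ⟨WTree.weak D td, ⟨by rw [hc]; exact hsub, hP⟩, rfl, ?_⟩
        show td.size + 1 ≤ _
        omega
      · obtain ⟨td, ha, hb, hc⟩ := H D hD
        exact ⟨td, ha, hb, by omega⟩
    · exact Or.inr H

end Stmt19Extract

section Stmt19Init

open Finset

variable {n k : ℕ} {C' : Clause}

/-- The initial assignment falsifying the extracted clause. -/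
noncomputable def initAssign (C' : Clause) : Assign := fun v =>
  if (v, false) ∈ C' then some true else if (v, true) ∈ C' then some false else none

lemma initAssign_true_iff {v : Var} :
    initAssign C' v = some true ↔ (v, false) ∈ C' := by
  unfold initAssign
  split_ifs with h1 h2 <;> simp [h1, *]

lemma initAssign_ne_none {v : Var} (h : initAssign C' v ≠ none) :
    (v, false) ∈ C' ∨ (v, true) ∈ C' := by
  unfold initAssign at h
  split_ifs at h with h1 h2
  · exact Or.inl h1
  · exact Or.inr h2
  · exact absurd rfl h

lemma initAssign_SInv (hGL : ¬ GoodLeaf n C') : SInv n (initAssign C') C' := by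
  rintro ⟨v, b⟩ hl
  cases b
  · left
    show initAssign C' v = some true
    rw [initAssign_true_iff]
    exact hl
  · by_cases hneg : (v, false) ∈ C'
    · right
      refine ⟨rfl, ?_⟩
      rintro ⟨i, j, hr, rfl⟩
      exact hGL (Or.inr ⟨i, j, hr, hl, hneg⟩)
    · left
      show initAssign C' v = some false
      unfold initAssign
      rw [if_neg hneg, if_pos hl]

lemma initAssign_SGood (hGL : ¬ GoodLeaf n C') : SGood n (initAssign C') := by
  intro i j i' j' hr hr' ht ht'
  rw [initAssign_true_iff] at ht ht'
  constructor
  · rintro rfl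
    by_contra hne
    rcases Nat.lt_or_ge j j' with h | h
    · refine hGL (Or.inl ⟨{negLit (phpVar n i j), negLit (phpVar n i j')}, ?_, ?_⟩)
      · exact Or.inr ⟨i, j, j', hr.1, hr.2.1, hr.2.2.1, h, hr'.2.2.2, rfl⟩
      · intro l hl
        rcases Finset.mem_insert.mp hl with rfl | hl
        · exact ht
        · rw [Finset.mem_singleton.mp hl]; exact ht'
    · have h' : j' < j := by omega
      refine hGL (Or.inl ⟨{negLit (phpVar n i j'), negLit (phpVar n i j)}, ?_, ?_⟩)
      · exact Or.inr ⟨i, j', j, hr.1, hr.2.1, hr'.2.2.1, h', hr.2.2.2, rfl⟩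
      · intro l hl
        rcases Finset.mem_insert.mp hl with rfl | hl
        · exact ht'
        · rw [Finset.mem_singleton.mp hl]; exact ht
  · rintro rfl
    by_contra hne
    rcases Nat.lt_or_ge i i' with h | h
    · refine hGL (Or.inl ⟨{negLit (phpVar n i j), negLit (phpVar n i' j)}, ?_, ?_⟩)
      · exact Or.inl (Or.inr ⟨i, i', j, hr.1, h, hr'.2.1, hr.2.2.1, hr.2.2.2, rfl⟩)
      · intro l hl
        rcases Finset.mem_insert.mp hl with rfl | hl
        · exact ht
        · rw [Finset.mem_singleton.mp hl]; exact ht'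
    · have h' : i' < i := by omega
      refine hGL (Or.inl ⟨{negLit (phpVar n i' j), negLit (phpVar n i j)}, ?_, ?_⟩)
      · exact Or.inl (Or.inr ⟨i', i, j, hr'.1, h', hr.2.1, hr.2.2.1, hr.2.2.2, rfl⟩)
      · intro l hl
        rcases Finset.mem_insert.mp hl with rfl | hl
        · exact ht'
        · rw [Finset.mem_singleton.mp hl]; exact ht

lemma initAssign_Us_card (hcard : C'.card ≤ k) {i : ℕ} (hi : i ∈ FPs n (initAssign C')) :
    n - k ≤ (Us n (initAssign C') i).card := by
  set α₀ := initAssign C' with hα₀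
  have hiIcc : i ∈ Icc 1 (n+1) := (Finset.mem_filter.mp hi).1
  rw [Finset.mem_Icc] at hiIcc
  set bad := (Icc 1 n).filter
    (fun j => ¬(¬ occupiedH n α₀ j ∧ α₀ (phpVar n i j) = none)) with hbad
  have hsplit : (Us n α₀ i).card + bad.card = n := by
    have heq := Finset.card_filter_add_card_filter_not
      (s := Icc 1 n) (p := fun j => ¬ occupiedH n α₀ j ∧ α₀ (phpVar n i j) = none)
    have heq' : (Us n α₀ i).card + bad.card = (Icc 1 n).card := heq
    rw [Nat.card_Icc] at heq'
    omega
  have hbadle : bad.card ≤ k := by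
    have hinj : ∀ j ∈ bad, ∃ a, 1 ≤ a ∧ a ≤ n + 1 ∧ phpVar n a j ∈ C'.image Prod.fst := by
      intro j hj
      obtain ⟨hjIcc, hcond⟩ := Finset.mem_filter.mp hj
      rw [Finset.mem_Icc] at hjIcc
      by_cases hocc : occupiedH n α₀ j
      · obtain ⟨a, ha1, ha2, hat⟩ := hocc
        refine ⟨a, ha1, ha2, ?_⟩
        rw [initAssign_true_iff] at hat
        exact Finset.mem_image.mpr ⟨_, hat, rfl⟩
      · have hne : α₀ (phpVar n i j) ≠ none := by tauto
        rcases initAssign_ne_none hne with h | h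
        · exact ⟨i, hiIcc.1, hiIcc.2, Finset.mem_image.mpr ⟨_, h, rfl⟩⟩
        · exact ⟨i, hiIcc.1, hiIcc.2, Finset.mem_image.mpr ⟨_, h, rfl⟩⟩
    choose f hf1 hf2 hf3 using hinj
    have : bad.card ≤ (C'.image Prod.fst).card := by
      apply Finset.card_le_card_of_injOn (fun j => if h : j ∈ bad then phpVar n (f j h) j else 0)
      · intro j hj
        simp only [Finset.mem_coe] at hj ⊢
        rw [dif_pos hj]
        exact hf3 j hj
      · intro j1 hj1 j2 hj2 he
        simp only [Finset.mem_coe] at hj1 hj2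
        simp only [dif_pos hj1, dif_pos hj2] at he
        have hj1I := Finset.mem_Icc.mp (Finset.mem_filter.mp hj1).1
        have hj2I := Finset.mem_Icc.mp (Finset.mem_filter.mp hj2).1
        exact (phpVar_inj ⟨hf1 j1 hj1, hf2 j1 hj1, hj1I.1, hj1I.2⟩
          ⟨hf1 j2 hj2, hf2 j2 hj2, hj2I.1, hj2I.2⟩ he).2
    calc bad.card ≤ (C'.image Prod.fst).card := this
      _ ≤ C'.card := Finset.card_image_le
      _ ≤ k := hcard
  omega

lemma initAssign_FPs_card (hcard : C'.card ≤ k) :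
    n + 1 - k ≤ (FPs n (initAssign C')).card := by
  set α₀ := initAssign C' with hα₀
  set bad := (Icc 1 (n+1)).filter (fun i => matchedP n α₀ i) with hbad
  have hsplit : bad.card + (FPs n α₀).card = n + 1 := by
    have heq := Finset.card_filter_add_card_filter_not
      (s := Icc 1 (n+1)) (p := fun i => matchedP n α₀ i)
    have heq' : bad.card + (FPs n α₀).card = (Icc 1 (n+1)).card := heq
    rw [Nat.card_Icc] at heq'
    omega
  have hbadle : bad.card ≤ k := by
    have hinj : ∀ i ∈ bad, ∃ b, 1 ≤ b ∧ b ≤ n ∧ phpVar n i b ∈ C'.image Prod.fst := by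
      intro i hi
      obtain ⟨hiIcc, j, hj1, hj2, hat⟩ := Finset.mem_filter.mp hi
      rw [initAssign_true_iff] at hat
      exact ⟨j, hj1, hj2, Finset.mem_image.mpr ⟨_, hat, rfl⟩⟩
    choose f hf1 hf2 hf3 using hinj
    have : bad.card ≤ (C'.image Prod.fst).card := by
      apply Finset.card_le_card_of_injOn (fun i => if h : i ∈ bad then phpVar n i (f i h) else 0)
      · intro i hi
        simp only [Finset.mem_coe] at hi ⊢
        rw [dif_pos hi]
        exact hf3 i hi
      · intro i1 hi1 i2 hi2 he
        simp only [Finset.mem_coe] at hi1 hi2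
        simp only [dif_pos hi1, dif_pos hi2] at he
        have hi1I := Finset.mem_Icc.mp (Finset.mem_filter.mp hi1).1
        have hi2I := Finset.mem_Icc.mp (Finset.mem_filter.mp hi2).1
        exact (phpVar_inj ⟨hi1I.1, hi1I.2, hf1 i1 hi1, hf2 i1 hi1⟩
          ⟨hi2I.1, hi2I.2, hf1 i2 hi2, hf2 i2 hi2⟩ he).1
    calc bad.card ≤ (C'.image Prod.fst).card := this
      _ ≤ C'.card := Finset.card_image_le
      _ ≤ k := hcard
  omega

lemma Wpot_ge {α : Assign} {base D : ℕ} (hD : D ≤ (FPs n α).card)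
    (hU : ∀ i ∈ FPs n α, base + D ≤ (Us n α i).card) :
    base ^ D ≤ Wpot n α D := by
  rcases Nat.eq_zero_or_pos D with rfl | hDpos
  · simp [Wpot]
  · unfold Wpot
    rw [if_neg (by omega)]
    obtain ⟨I, hsub, hcard⟩ := Finset.exists_subset_card_eq hD
    have hne : (Wset n α D).Nonempty := ⟨_, I, hsub, hcard, rfl⟩
    obtain ⟨I', hsub', hcard', hp'⟩ := Nat.sInf_mem hne
    rw [hp']
    calc base ^ D = ∏ _i ∈ I', base := by rw [Finset.prod_const, hcard']
      _ ≤ ∏ i ∈ I', ((Us n α i).card - D) := by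
          apply Finset.prod_le_prod'
          intro i hi
          have := hU i (hsub' hi)
          omega

end Stmt19Init

section Stmt19Final

open Finset

lemma not_goodLeaf_empty {n : ℕ} (hn : 1 ≤ n) : ¬ GoodLeaf n (∅ : Clause) := by
  rintro (⟨A, hA, hsub⟩ | ⟨i, j, hr, hpos, _⟩)
  · have hA0 : A = ∅ := Finset.subset_empty.mp hsub
    subst hA0
    rcases hA with (h | h) | h
    · obtain ⟨i, hi1, hi2, heq⟩ := h
      have hne : ((Icc 1 n).image (fun j => posLit (phpVar n i j))).Nonempty :=
        Finset.image_nonempty.mpr ⟨1, Finset.mem_Icc.mpr ⟨le_refl 1, hn⟩⟩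
      exact hne.ne_empty heq.symm
    · obtain ⟨i, j, k, _, _, _, _, _, heq⟩ := h
      exact (Finset.insert_ne_empty _ _) heq.symm
    · obtain ⟨i, j, k, _, _, _, _, _, heq⟩ := h
      exact (Finset.insert_ne_empty _ _) heq.symm
  · exact absurd hpos (Finset.notMem_empty _)

theorem stmt19' (n k : ℕ) (hk : 2 * k ≤ n) (t : WTree)
    (ht : IsRTLW (FPHP n) k t ∅) (hc : t.conc = ∅) :
    (1 / 2 : ℝ) * ((n : ℝ) / 8) ^ ((n : ℝ) / 8) ≤ (t.size : ℝ) := by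
  have hsize1 : (1 : ℝ) ≤ (t.size : ℝ) := by
    exact_mod_cast WTree.one_le_size t
  by_cases hn : n < 8
  · -- trivial range
    have h1 : ((n : ℝ) / 8) ^ ((n : ℝ) / 8) ≤ 1 := by
      apply Real.rpow_le_one (by positivity) ?_ (by positivity)
      have : (n : ℝ) ≤ 8 := by exact_mod_cast hn.le
      linarith
    nlinarith
  · push_neg at hn
    have hn8 : (8 : ℕ) ≤ n := hn
    -- extract a pure derivation of a small non-GoodLeaf clause
    have vac : ∀ D ∈ (∅ : Set Clause), D.card ≤ k → ¬ GoodLeaf n D →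
        ∃ td : WTree, PTree n td ∧ td.conc = D ∧ td.size ≤ t.size :=
      fun D hD => absurd hD (Set.notMem_empty D)
    obtain ⟨C', td, hPT, hconc, hsz, hcard, hGL⟩ :
        ∃ (C' : Clause) (td : WTree), PTree n td ∧ td.conc = C' ∧ td.size ≤ t.size ∧
          C'.card ≤ k ∧ ¬ GoodLeaf n C' := by
      rcases extract_pure t ∅ ht le_rfl vac with H | H
      · obtain ⟨td, hPT, hconc, hsize⟩ := H ∅ (hc ▸ t.conc_mem_allClauses)
        exact ⟨∅, td, hPT, hconc, hsize, by simp, not_goodLeaf_empty (by omega)⟩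
      · exact H
    -- set up the potential
    set α₀ := initAssign C' with hα₀
    set D := n / 4 with hD
    set base := n - k - n / 4 with hbase
    have hkn : k ≤ n / 2 := by omega
    have hDcard : D ≤ (FPs n α₀).card := by
      have h := initAssign_FPs_card (n := n) (k := k) hcard
      rw [← hα₀] at h
      omega
    have hUcard : ∀ i ∈ FPs n α₀, base + D ≤ (Us n α₀ i).card := by
      intro i hi
      have h := initAssign_Us_card (n := n) (k := k) hcard (by rw [hα₀] at hi; exact hi)
      rw [← hα₀] at h
      omega
    have hWlow : base ^ D ≤ Wpot n α₀ D := Wpot_ge hDcard hUcard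
    have hWhigh : Wpot n α₀ D ≤ td.size := by
      apply phase1 td hPT α₀ D (initAssign_SGood hGL)
      rw [hconc]
      exact initAssign_SInv hGL
    -- arithmetic
    set q := n / 8 with hq
    have hq1 : 1 ≤ q := by omega
    set r : ℝ := (n : ℝ) / 8 with hr
    have hr1 : (1 : ℝ) ≤ r := by
      rw [hr]
      rw [le_div_iff₀ (by norm_num)]
      exact_mod_cast hn8
    have hbase4 : (n : ℝ) / 4 ≤ (base : ℝ) := by
      have hsub : k + n / 4 ≤ n := by omega
      have hcast : (base : ℝ) = (n : ℝ) - (k : ℝ) - ((n / 4 : ℕ) : ℝ) := by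
        rw [hbase]
        push_cast [Nat.sub_sub]
        rw [Nat.cast_sub (by omega)]
        push_cast
        ring
      have h1 : ((n / 4 : ℕ) : ℝ) * 4 ≤ (n : ℝ) := by
        exact_mod_cast Nat.div_mul_le_self n 4
      have h2 : (k : ℝ) * 2 ≤ (n : ℝ) := by
        have h2' : k * 2 ≤ n := by omega
        exact_mod_cast h2'
      rw [hcast]
      linarith
    have hb1 : (1 : ℝ) ≤ (base : ℝ) := by
      have : (2 : ℝ) ≤ (n : ℝ) / 4 := by
        have : (8 : ℝ) ≤ (n : ℝ) := by exact_mod_cast hn8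
        linarith
      linarith
    have hD2q : 2 * q ≤ D := by omega
    have key : (1 / 2 : ℝ) * ((n : ℝ) / 8) ^ ((n : ℝ) / 8) ≤ (base : ℝ) ^ D := by
      have step1 : ((n : ℝ) / 8) ^ ((n : ℝ) / 8) ≤ r ^ (q + 1) := by
        have h1 : ((n : ℝ) / 8) ^ ((n : ℝ) / 8) ≤ ((n : ℝ) / 8) ^ (((q + 1 : ℕ)) : ℝ) := by
          apply Real.rpow_le_rpow_of_exponent_le hr1
          have : n < 8 * (q + 1) := by omega
          have hcast : (n : ℝ) < 8 * ((q : ℝ) + 1) := by exact_mod_cast this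
          push_cast
          linarith
        rw [Real.rpow_natCast] at h1
        exact_mod_cast h1
      have step2 : (1 / 2 : ℝ) * r ^ (q + 1) ≤ ((n : ℝ) / 4) ^ (2 * q) := by
        have hrq : r ≤ r ^ q := le_self_pow₀ (by linarith) (by omega)
        have h4q : (1 : ℝ) ≤ 4 ^ q := by
          have := pow_le_pow_left₀ (by norm_num : (0:ℝ) ≤ 1) (by norm_num : (1:ℝ) ≤ 4) q
          simpa using this
        have hrq0 : (0 : ℝ) ≤ r ^ q := by positivity
        have hmul : (1 / 2 : ℝ) * r ≤ 4 ^ q * r ^ q := by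
          have := mul_le_mul h4q hrq (by linarith) (by positivity)
          nlinarith
        have hexp : (2 * r) ^ (2 * q) = 4 ^ q * r ^ q * r ^ q := by
          rw [pow_mul]
          have h22 : (2 * r) ^ 2 = 4 * r ^ 2 := by ring
          rw [h22, mul_pow, ← pow_mul]
          have hrr : r ^ (2 * q) = r ^ q * r ^ q := by rw [two_mul, pow_add]
          rw [hrr]
          ring
        calc (1 / 2 : ℝ) * r ^ (q + 1) = ((1 / 2) * r) * r ^ q := by ring
          _ ≤ (4 ^ q * r ^ q) * r ^ q := by nlinarith [hmul, hrq0]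
          _ = (2 * r) ^ (2 * q) := by rw [hexp]
          _ = ((n : ℝ) / 4) ^ (2 * q) := by
              congr 1
              rw [hr]; ring
      have step3 : ((n : ℝ) / 4) ^ (2 * q) ≤ (base : ℝ) ^ (2 * q) :=
        pow_le_pow_left₀ (by positivity) hbase4 _
      have step4 : (base : ℝ) ^ (2 * q) ≤ (base : ℝ) ^ D :=
        pow_le_pow_right₀ hb1 hD2q
      calc (1 / 2 : ℝ) * ((n : ℝ) / 8) ^ ((n : ℝ) / 8)
          ≤ (1 / 2 : ℝ) * r ^ (q + 1) := by nlinarith [step1]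
        _ ≤ ((n : ℝ) / 4) ^ (2 * q) := step2
        _ ≤ (base : ℝ) ^ (2 * q) := step3
        _ ≤ (base : ℝ) ^ D := step4
    have hfin : (base : ℝ) ^ D ≤ (t.size : ℝ) := by
      have h1 : (base ^ D : ℕ) ≤ t.size := by
        calc base ^ D ≤ Wpot n α₀ D := hWlow
          _ ≤ td.size := hWhigh
          _ ≤ t.size := hsz
      calc (base : ℝ) ^ D = ((base ^ D : ℕ) : ℝ) := by push_cast; ring
        _ ≤ (t.size : ℝ) := by exact_mod_cast h1
    linarith

end Stmt19Final

/-- Thm. 8.5: for `k ≤ n/2`, every RTLW(k) refutation of `FPHP_n` has size at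
least `(1/2)·(n/8)^(n/8)`. -/
theorem stmt19 (n k : ℕ) (hk : 2 * k ≤ n) (t : WTree)
    (ht : IsRTLW (FPHP n) k t ∅) (hc : t.conc = ∅) :
    (1 / 2 : ℝ) * ((n : ℝ) / 8) ^ ((n : ℝ) / 8) ≤ (t.size : ℝ) :=
  stmt19' n k hk t ht hc
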